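/- For every integer n ≥ 6 there exists a 6-antichain saturated family of subsets of [n] of size exactly 5n − 5. -/

import Mathlib

open Finset

/-- A family `F` of finite subsets of ℕ contains a `k`-antichain: there are `k` sets in `F`
that are pairwise incomparable under inclusion. -/
def ContainsAntichain (k : ℕ) (F : Finset (Finset ℕ)) : Prop :=
  ∃ S ⊆ F, S.card = k ∧ ∀ A ∈ S, ∀ B ∈ S, A ≠ B → ¬ A ⊆ B

/-- `F` is a `k`-antichain saturated family of subsets of `[n] = {1, …, n}`:
all members are subsets of `[n]`, `F` contains no `k`-antichain, but adding any new
subset of `[n]` creates a `k`-antichain. -/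
def IsAntichainSaturated (n k : ℕ) (F : Finset (Finset ℕ)) : Prop :=
  (∀ A ∈ F, A ⊆ Finset.Icc 1 n) ∧
  ¬ ContainsAntichain k F ∧
  ∀ X ⊆ Finset.Icc 1 n, X ∉ F → ContainsAntichain k (insert X F)

namespace SixSat




def tl (m : ℕ) : Finset ℕ := Finset.Icc 7 (m + 3)
def md (B : Finset ℕ) (m : ℕ) : Finset ℕ := B ∪ tl m
def lowF : Finset (Finset ℕ) :=
  {∅, {1}, {2}, {3}, {5}, {1,2}, {1,3}, {1,5}, {2,3}, {3,5}}
def blk (m : ℕ) : Finset (Finset ℕ) :=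
  {md {1,2,6} m, md {1,3,5} m, md {2,3,4} m, md {1,2,3} m, md {3,5,6} m}
def midF (n : ℕ) : Finset (Finset ℕ) := (Finset.Icc 3 (n-3)).biUnion blk
def cmpl : Finset (Finset ℕ) := {{4,5},{2,6},{5,6},{4,6},{2,4},{5},{2},{6},{4},∅}
def topF (n : ℕ) : Finset (Finset ℕ) := cmpl.image (fun s => Finset.Icc 1 n \ s)
def FF (n : ℕ) : Finset (Finset ℕ) := lowF ∪ midF n ∪ topF n

lemma md_ne {B C : Finset ℕ} {m k : ℕ} (x : ℕ) (hx : x ∈ B) (hx' : x ∉ C) (h7 : x < 7) :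
    md B m ≠ md C k := by
  intro h
  have hmem : x ∈ md C k := h ▸ Finset.mem_union_left _ hx
  rcases Finset.mem_union.1 hmem with h | h
  · exact hx' h
  · simp only [tl, Finset.mem_Icc] at h; omega

lemma md_card {B : Finset ℕ} {m : ℕ} (hB : B.card = 3) (hB7 : ∀ x ∈ B, x < 7) (hm : 3 ≤ m) :
    (md B m).card = m := by
  rw [md, card_union_of_disjoint]
  · rw [hB, tl, Nat.card_Icc]; omega
  · rw [Finset.disjoint_left]
    intro a ha h2
    have := hB7 a ha
    simp only [tl, Finset.mem_Icc] at h2; omega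

lemma low_mem {n : ℕ} {A : Finset ℕ} (h : A ∈ lowF) : A ∈ FF n :=
  mem_union_left _ (mem_union_left _ h)

lemma mid_mem {n m : ℕ} {A : Finset ℕ} (hm : 3 ≤ m) (hm' : m ≤ n - 3) (h : A ∈ blk m) :
    A ∈ FF n :=
  mem_union_left _ (mem_union_right _ (Finset.mem_biUnion.2
    ⟨m, Finset.mem_Icc.2 ⟨hm, hm'⟩, h⟩))

lemma top_mem {n : ℕ} {s : Finset ℕ} (h : s ∈ cmpl) : Finset.Icc 1 n \ s ∈ FF n :=
  mem_union_right _ (Finset.mem_image_of_mem _ h)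

lemma sdiff_ne {n : ℕ} {s t : Finset ℕ} (x : ℕ) (hx : x ∈ s) (hx' : x ∉ t)
    (h1 : 1 ≤ x) (h2 : x ≤ n) :
    Finset.Icc 1 n \ s ≠ Finset.Icc 1 n \ t := by
  intro h
  have hmem : x ∈ Finset.Icc 1 n \ t := by
    simp only [Finset.mem_sdiff, Finset.mem_Icc]
    exact ⟨⟨h1, h2⟩, hx'⟩
  rw [← h] at hmem
  exact (Finset.mem_sdiff.1 hmem).2 hx

lemma copair_card {n : ℕ} {s : Finset ℕ} (hsub : s ⊆ Finset.Icc 1 n) (hs : s.card = 2) :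
    (Finset.Icc 1 n \ s).card = n - 2 := by
  rw [Finset.card_sdiff_of_subset hsub, Nat.card_Icc, hs]; omega

-- generic same-card antichain builder
lemma CA_same_card {F S : Finset (Finset ℕ)} {k m₀ : ℕ} (hS : S ⊆ F) (hc : S.card = k)
    (hcard : ∀ A ∈ S, A.card = m₀) : ContainsAntichain k F :=
  ⟨S, hS, hc, fun A hA B hB hne hsub =>
    hne (Finset.eq_of_subset_of_card_le hsub
      (le_of_eq ((hcard B hB).trans (hcard A hA).symm)))⟩

lemma card_six {F : Finset (Finset ℕ)} {X w1 w2 w3 w4 w5 : Finset ℕ}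
    (hXF : X ∉ F) (h1 : w1 ∈ F) (h2 : w2 ∈ F) (h3 : w3 ∈ F) (h4 : w4 ∈ F) (h5 : w5 ∈ F)
    (d12 : w1 ≠ w2) (d13 : w1 ≠ w3) (d14 : w1 ≠ w4) (d15 : w1 ≠ w5)
    (d23 : w2 ≠ w3) (d24 : w2 ≠ w4) (d25 : w2 ≠ w5)
    (d34 : w3 ≠ w4) (d35 : w3 ≠ w5) (d45 : w4 ≠ w5) :
    (insert X {w1, w2, w3, w4, w5} : Finset (Finset ℕ)).card = 6 := by
  have hX1 : X ≠ w1 := fun h => hXF (h ▸ h1)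
  have hX2 : X ≠ w2 := fun h => hXF (h ▸ h2)
  have hX3 : X ≠ w3 := fun h => hXF (h ▸ h3)
  have hX4 : X ≠ w4 := fun h => hXF (h ▸ h4)
  have hX5 : X ≠ w5 := fun h => hXF (h ▸ h5)
  rw [card_insert_of_notMem (by simp [hX1, hX2, hX3, hX4, hX5]),
      card_insert_of_notMem (by simp [d12, d13, d14, d15]),
      card_insert_of_notMem (by simp [d23, d24, d25]),
      card_insert_of_notMem (by simp [d34, d35]),
      card_insert_of_notMem (by simp [d45]), card_singleton]

lemma subset_six {F : Finset (Finset ℕ)} {X w1 w2 w3 w4 w5 : Finset ℕ}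
    (h1 : w1 ∈ F) (h2 : w2 ∈ F) (h3 : w3 ∈ F) (h4 : w4 ∈ F) (h5 : w5 ∈ F) :
    (insert X {w1, w2, w3, w4, w5} : Finset (Finset ℕ)) ⊆ insert X F := by
  intro A hA
  simp only [Finset.mem_insert, Finset.mem_singleton] at hA
  rcases hA with rfl | rfl | rfl | rfl | rfl | rfl
  · exact Finset.mem_insert_self _ _
  all_goals exact Finset.mem_insert_of_mem ‹_›

lemma sat {n : ℕ} (hn : 6 ≤ n) (X : Finset ℕ) (hX : X ⊆ Finset.Icc 1 n)
    (hXF : X ∉ FF n) : ContainsAntichain 6 (insert X (FF n)) := by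
  have hIcc : (Finset.Icc 1 n).card = n := by rw [Nat.card_Icc]; omega
  have hm_le : X.card ≤ n := hIcc ▸ Finset.card_le_card hX
  -- X is not empty and not everything
  have hm0 : X.card ≠ 0 := by
    intro h
    exact hXF (Finset.card_eq_zero.1 h ▸ low_mem (by decide))
  have hmn : X.card ≠ n := by
    intro h
    have : X = Finset.Icc 1 n := Finset.eq_of_subset_of_card_le hX (by omega)
    exact hXF (this ▸ (by simpa using top_mem (n := n) (s := ∅) (by decide)))
  have hcase : X.card = 1 ∨ X.card = 2 ∨ (3 ≤ X.card ∧ X.card ≤ n - 3) ∨ X.card = n - 2 ∨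
      X.card = n - 1 := by omega
  rcases hcase with h1 | h2 | ⟨h3, h3'⟩ | h4 | h5
  · -- X = {j}, use the five pairs
    obtain ⟨j, rfl⟩ := Finset.card_eq_one.1 h1
    have hj1 : j ≠ 1 := fun h => hXF (h ▸ low_mem (by decide))
    have hj2 : j ≠ 2 := fun h => hXF (h ▸ low_mem (by decide))
    have hj3 : j ≠ 3 := fun h => hXF (h ▸ low_mem (by decide))
    have hj5 : j ≠ 5 := fun h => hXF (h ▸ low_mem (by decide))
    refine ⟨insert {j} {{1,2},{1,3},{1,5},{2,3},{3,5}},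
      subset_six (low_mem (by decide)) (low_mem (by decide)) (low_mem (by decide))
        (low_mem (by decide)) (low_mem (by decide)), ?_, ?_⟩
    · exact card_six hXF (low_mem (by decide)) (low_mem (by decide)) (low_mem (by decide))
        (low_mem (by decide)) (low_mem (by decide)) (by decide) (by decide) (by decide)
        (by decide) (by decide) (by decide) (by decide) (by decide) (by decide) (by decide)
    · intro A hA B hB hne hsub
      simp only [Finset.mem_insert, Finset.mem_singleton] at hA hB
      have hcA : A = {j} ∨ A.card = 2 := by
        rcases hA with rfl | rfl | rfl | rfl | rfl | rfl
        · exact Or.inl rfl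
        all_goals exact Or.inr (by decide)
      have hcB : B = {j} ∨ B.card = 2 := by
        rcases hB with rfl | rfl | rfl | rfl | rfl | rfl
        · exact Or.inl rfl
        all_goals exact Or.inr (by decide)
      rcases hcA with rfl | hcA
      · -- A = {j} ⊆ B with B a pair: j ∈ B
        rcases hB with rfl | rfl | rfl | rfl | rfl | rfl
        · exact hne rfl
        all_goals {
          have hjB := hsub (Finset.mem_singleton_self j)
          simp only [Finset.mem_insert, Finset.mem_singleton] at hjB
          omega }
      · rcases hcB with rfl | hcB
        · -- pair ⊆ {j}: impossible by card
          have := Finset.card_le_card hsub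
          simp only [Finset.card_singleton] at this
          omega
        · exact hne (Finset.eq_of_subset_of_card_le hsub (by omega))
  · -- card 2 : the five pairs, all same size
    refine CA_same_card (S := insert X {{1,2},{1,3},{1,5},{2,3},{3,5}}) (subset_six (low_mem (by decide)) (low_mem (by decide))
      (low_mem (by decide)) (low_mem (by decide)) (low_mem (by decide)))
      (card_six hXF (low_mem (by decide)) (low_mem (by decide)) (low_mem (by decide))
        (low_mem (by decide)) (low_mem (by decide)) (by decide) (by decide) (by decide)
        (by decide) (by decide) (by decide) (by decide) (by decide) (by decide) (by decide))
      (m₀ := 2) ?_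
    intro A hA
    simp only [Finset.mem_insert, Finset.mem_singleton] at hA
    rcases hA with rfl | rfl | rfl | rfl | rfl | rfl
    · exact h2
    all_goals decide
  · -- mid levels
    set m := X.card with hmdef
    have hb1 : md {1,2,6} m ∈ blk m := by simp [blk]
    have hb2 : md {1,3,5} m ∈ blk m := by simp [blk]
    have hb3 : md {2,3,4} m ∈ blk m := by simp [blk]
    have hb4 : md {1,2,3} m ∈ blk m := by simp [blk]
    have hb5 : md {3,5,6} m ∈ blk m := by simp [blk]
    refine CA_same_card (subset_six (mid_mem h3 h3' hb1) (mid_mem h3 h3' hb2)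
      (mid_mem h3 h3' hb3) (mid_mem h3 h3' hb4) (mid_mem h3 h3' hb5))
      (card_six hXF (mid_mem h3 h3' hb1) (mid_mem h3 h3' hb2) (mid_mem h3 h3' hb3)
        (mid_mem h3 h3' hb4) (mid_mem h3 h3' hb5)
        (md_ne 2 (by decide) (by decide) (by norm_num))
        (md_ne 1 (by decide) (by decide) (by norm_num))
        (md_ne 6 (by decide) (by decide) (by norm_num))
        (md_ne 1 (by decide) (by decide) (by norm_num))
        (md_ne 1 (by decide) (by decide) (by norm_num))
        (md_ne 5 (by decide) (by decide) (by norm_num))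
        (md_ne 1 (by decide) (by decide) (by norm_num))
        (md_ne 4 (by decide) (by decide) (by norm_num))
        (md_ne 2 (by decide) (by decide) (by norm_num))
        (md_ne 1 (by decide) (by decide) (by norm_num)))
      (m₀ := m) ?_
    intro A hA
    simp only [Finset.mem_insert, Finset.mem_singleton] at hA
    rcases hA with rfl | rfl | rfl | rfl | rfl | rfl
    · rfl
    all_goals exact md_card (by decide) (by decide) h3
  · -- card n-2 : the five copairs
    have hs1 : ({4,5} : Finset ℕ) ⊆ Finset.Icc 1 n := by
      intro x hx; simp only [Finset.mem_insert, Finset.mem_singleton] at hx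
      simp only [Finset.mem_Icc]; omega
    have hs2 : ({2,6} : Finset ℕ) ⊆ Finset.Icc 1 n := by
      intro x hx; simp only [Finset.mem_insert, Finset.mem_singleton] at hx
      simp only [Finset.mem_Icc]; omega
    have hs3 : ({5,6} : Finset ℕ) ⊆ Finset.Icc 1 n := by
      intro x hx; simp only [Finset.mem_insert, Finset.mem_singleton] at hx
      simp only [Finset.mem_Icc]; omega
    have hs4 : ({4,6} : Finset ℕ) ⊆ Finset.Icc 1 n := by
      intro x hx; simp only [Finset.mem_insert, Finset.mem_singleton] at hx
      simp only [Finset.mem_Icc]; omega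
    have hs5 : ({2,4} : Finset ℕ) ⊆ Finset.Icc 1 n := by
      intro x hx; simp only [Finset.mem_insert, Finset.mem_singleton] at hx
      simp only [Finset.mem_Icc]; omega
    refine CA_same_card (S := insert X {Finset.Icc 1 n \ {4,5}, Finset.Icc 1 n \ {2,6},
        Finset.Icc 1 n \ {5,6}, Finset.Icc 1 n \ {4,6}, Finset.Icc 1 n \ {2,4}})
      (subset_six (top_mem (by decide)) (top_mem (by decide))
      (top_mem (by decide)) (top_mem (by decide)) (top_mem (by decide)))
      (card_six hXF (top_mem (by decide)) (top_mem (by decide)) (top_mem (by decide))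
        (top_mem (by decide)) (top_mem (by decide))
        (sdiff_ne 4 (by decide) (by decide) (by norm_num) (by omega))
        (sdiff_ne 4 (by decide) (by decide) (by norm_num) (by omega))
        (sdiff_ne 5 (by decide) (by decide) (by norm_num) (by omega))
        (sdiff_ne 5 (by decide) (by decide) (by norm_num) (by omega))
        (sdiff_ne 2 (by decide) (by decide) (by norm_num) (by omega))
        (sdiff_ne 2 (by decide) (by decide) (by norm_num) (by omega))
        (sdiff_ne 6 (by decide) (by decide) (by norm_num) (by omega))
        (sdiff_ne 5 (by decide) (by decide) (by norm_num) (by omega))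
        (sdiff_ne 6 (by decide) (by decide) (by norm_num) (by omega))
        (sdiff_ne 6 (by decide) (by decide) (by norm_num) (by omega)))
      (m₀ := n - 2) ?_
    intro A hA
    simp only [Finset.mem_insert, Finset.mem_singleton] at hA
    rcases hA with rfl | rfl | rfl | rfl | rfl | rfl
    · exact h4
    · exact copair_card hs1 (by decide)
    · exact copair_card hs2 (by decide)
    · exact copair_card hs3 (by decide)
    · exact copair_card hs4 (by decide)
    · exact copair_card hs5 (by decide)
  · -- card n-1: X = Icc \ {j}
    have hD : (Finset.Icc 1 n \ X).card = 1 := by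
      rw [Finset.card_sdiff_of_subset hX, hIcc]; omega
    obtain ⟨j, hj⟩ := Finset.card_eq_one.1 hD
    have hXeq : X = Finset.Icc 1 n \ {j} := by
      rw [← hj, Finset.sdiff_sdiff_eq_self hX]
    have hjmem : j ∈ Finset.Icc 1 n \ X := hj ▸ Finset.mem_singleton_self j
    have hjIcc : j ∈ Finset.Icc 1 n := (Finset.mem_sdiff.1 hjmem).1
    have hjX : j ∉ X := (Finset.mem_sdiff.1 hjmem).2
    have hj2 : j ≠ 2 := fun h => hXF (by rw [hXeq, h]; exact top_mem (by decide))
    have hj4 : j ≠ 4 := fun h => hXF (by rw [hXeq, h]; exact top_mem (by decide))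
    have hj5 : j ≠ 5 := fun h => hXF (by rw [hXeq, h]; exact top_mem (by decide))
    have hj6 : j ≠ 6 := fun h => hXF (by rw [hXeq, h]; exact top_mem (by decide))
    refine ⟨insert X {Finset.Icc 1 n \ {4,5}, Finset.Icc 1 n \ {2,6}, Finset.Icc 1 n \ {5,6},
      Finset.Icc 1 n \ {4,6}, Finset.Icc 1 n \ {2,4}},
      subset_six (top_mem (by decide)) (top_mem (by decide)) (top_mem (by decide))
        (top_mem (by decide)) (top_mem (by decide)), ?_, ?_⟩
    · exact card_six hXF (top_mem (by decide)) (top_mem (by decide)) (top_mem (by decide))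
        (top_mem (by decide)) (top_mem (by decide))
        (sdiff_ne 4 (by decide) (by decide) (by norm_num) (by omega))
        (sdiff_ne 4 (by decide) (by decide) (by norm_num) (by omega))
        (sdiff_ne 5 (by decide) (by decide) (by norm_num) (by omega))
        (sdiff_ne 5 (by decide) (by decide) (by norm_num) (by omega))
        (sdiff_ne 2 (by decide) (by decide) (by norm_num) (by omega))
        (sdiff_ne 2 (by decide) (by decide) (by norm_num) (by omega))
        (sdiff_ne 6 (by decide) (by decide) (by norm_num) (by omega))
        (sdiff_ne 5 (by decide) (by decide) (by norm_num) (by omega))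
        (sdiff_ne 6 (by decide) (by decide) (by norm_num) (by omega))
        (sdiff_ne 6 (by decide) (by decide) (by norm_num) (by omega))
    · intro A hA B hB hne hsub
      simp only [Finset.mem_insert, Finset.mem_singleton] at hA hB
      -- key facts
      have hjin : ∀ s : Finset ℕ, s ∈ cmpl → j ∉ s → j ∈ Finset.Icc 1 n \ s := by
        intro s _ hjs
        exact Finset.mem_sdiff.2 ⟨hjIcc, hjs⟩
      rcases hA with rfl | rfl | rfl | rfl | rfl | rfl
      · -- A = X ⊆ B : card contradiction
        rcases hB with rfl | rfl | rfl | rfl | rfl | rfl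
        · exact hne rfl
        all_goals {
          have hc := Finset.card_le_card hsub
          rw [h5] at hc
          rw [copair_card (by intro x hx; simp only [Finset.mem_insert,
            Finset.mem_singleton] at hx; simp only [Finset.mem_Icc]; omega) (by decide)] at hc
          omega }
      all_goals {
        rcases hB with rfl | hB
        · -- copair ⊆ X but j is in the copair, j ∉ X
          refine hjX (hsub ?_)
          refine Finset.mem_sdiff.2 ⟨hjIcc, ?_⟩
          simp only [Finset.mem_insert, Finset.mem_singleton]
          omega
        · -- two copairs: same card
          have hcB : B.card = n - 2 := by
            rcases hB with rfl | rfl | rfl | rfl | rfl <;>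
              exact copair_card (by intro x hx; simp only [Finset.mem_insert,
                Finset.mem_singleton] at hx; simp only [Finset.mem_Icc]; omega) (by decide)
          have hcA : (n : ℕ) - 2 = n - 2 := rfl
          refine hne (Finset.eq_of_subset_of_card_le hsub ?_)
          rw [hcB, copair_card (by intro x hx; simp only [Finset.mem_insert,
            Finset.mem_singleton] at hx; simp only [Finset.mem_Icc]; omega) (by decide)] }










-- helper: distinctness of md sets


lemma mem_blk_card {A : Finset ℕ} {m : ℕ} (hm : 3 ≤ m) (hA : A ∈ blk m) : A.card = m := by
  simp only [blk, Finset.mem_insert, Finset.mem_singleton] at hA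
  rcases hA with rfl | rfl | rfl | rfl | rfl <;>
    exact md_card (by decide) (by decide) hm

lemma blk_card {m : ℕ} : (blk m).card = 5 := by
  have h12 : md {1,2,6} m ≠ md {1,3,5} m := md_ne 2 (by decide) (by decide) (by norm_num)
  have h13 : md {1,2,6} m ≠ md {2,3,4} m := md_ne 1 (by decide) (by decide) (by norm_num)
  have h14 : md {1,2,6} m ≠ md {1,2,3} m := md_ne 6 (by decide) (by decide) (by norm_num)
  have h15 : md {1,2,6} m ≠ md {3,5,6} m := md_ne 1 (by decide) (by decide) (by norm_num)
  have h23 : md {1,3,5} m ≠ md {2,3,4} m := md_ne 1 (by decide) (by decide) (by norm_num)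
  have h24 : md {1,3,5} m ≠ md {1,2,3} m := md_ne 5 (by decide) (by decide) (by norm_num)
  have h25 : md {1,3,5} m ≠ md {3,5,6} m := md_ne 1 (by decide) (by decide) (by norm_num)
  have h34 : md {2,3,4} m ≠ md {1,2,3} m := md_ne 4 (by decide) (by decide) (by norm_num)
  have h35 : md {2,3,4} m ≠ md {3,5,6} m := md_ne 2 (by decide) (by decide) (by norm_num)
  have h45 : md {1,2,3} m ≠ md {3,5,6} m := md_ne 1 (by decide) (by decide) (by norm_num)
  unfold blk
  rw [card_insert_of_notMem (by simp [h12, h13, h14, h15]),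
      card_insert_of_notMem (by simp [h23, h24, h25]),
      card_insert_of_notMem (by simp [h34, h35]),
      card_insert_of_notMem (by simp [h45]), card_singleton]

lemma midF_card {n : ℕ} (hn : 6 ≤ n) : (midF n).card = 5 * (n - 5) := by
  rw [midF, card_biUnion]
  · rw [Finset.sum_congr rfl (fun m _ => blk_card), Finset.sum_const, Nat.card_Icc,
      smul_eq_mul]
    omega
  · intro x hx y hy hxy
    rw [Function.onFun, Finset.disjoint_left]
    intro A hAx hAy
    simp only [Finset.mem_coe, Finset.mem_Icc] at hx hy
    exact hxy ((mem_blk_card hx.1 hAx).symm.trans (mem_blk_card hy.1 hAy))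

lemma cmpl_subset {n : ℕ} (hn : 6 ≤ n) : ∀ s ∈ cmpl, s ⊆ Finset.Icc 1 n := by
  intro s hs
  fin_cases hs <;> intro x hx <;>
    simp only [Finset.mem_insert, Finset.mem_singleton, Finset.notMem_empty] at hx <;>
    simp only [Finset.mem_Icc] <;> omega

lemma topF_card {n : ℕ} (hn : 6 ≤ n) : (topF n).card = 10 := by
  rw [topF, Finset.card_image_of_injOn, show cmpl.card = 10 by decide]
  intro s hs t ht h
  simp only [Finset.mem_coe] at hs ht
  dsimp only at h
  have hs' := cmpl_subset hn s hs
  have ht' := cmpl_subset hn t ht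
  have : Finset.Icc 1 n \ (Finset.Icc 1 n \ s) = Finset.Icc 1 n \ (Finset.Icc 1 n \ t) := by
    rw [h]
  rwa [Finset.sdiff_sdiff_eq_self hs', Finset.sdiff_sdiff_eq_self ht'] at this

lemma mem_lowF_card {A : Finset ℕ} (hA : A ∈ lowF) : A.card ≤ 2 := by
  fin_cases hA <;> decide

lemma mem_midF_card {n : ℕ} {A : Finset ℕ} (hA : A ∈ midF n) :
    3 ≤ A.card ∧ A.card ≤ n - 3 := by
  rw [midF, Finset.mem_biUnion] at hA
  obtain ⟨m, hm, hAm⟩ := hA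
  simp only [Finset.mem_Icc] at hm
  rw [mem_blk_card hm.1 hAm]
  exact hm

lemma mem_topF_card {n : ℕ} {A : Finset ℕ} (hn : 6 ≤ n) (hA : A ∈ topF n) :
    n - 2 ≤ A.card := by
  rw [topF, Finset.mem_image] at hA
  obtain ⟨s, hs, rfl⟩ := hA
  rw [Finset.card_sdiff_of_subset (cmpl_subset hn s hs), Nat.card_Icc]
  have : s.card ≤ 2 := by fin_cases hs <;> decide
  omega

lemma FF_card {n : ℕ} (hn : 6 ≤ n) : (FF n).card = 5 * n - 5 := by
  rw [FF, card_union_of_disjoint, card_union_of_disjoint, midF_card hn, topF_card hn,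
    show lowF.card = 10 by decide]
  · omega
  · rw [Finset.disjoint_left]
    intro A hA hA'
    have := mem_lowF_card hA
    have := (mem_midF_card hA').1
    omega
  · rw [Finset.disjoint_left]
    intro A hA hA'
    have h2 := mem_topF_card hn hA'
    rcases Finset.mem_union.1 hA with h | h
    · have := mem_lowF_card h; omega
    · have := (mem_midF_card h).2; omega





def ch (n : ℕ) (l1 l2 B h2 h1 : Finset ℕ) (m : ℕ) : Finset ℕ :=
  if m = 0 then ∅
  else if m = 1 then l1
  else if m = 2 then l2
  else if m ≤ n - 3 then md B m
  else if m = n - 2 then h2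
  else if m = n - 1 then h1
  else Finset.Icc 1 n

variable {n : ℕ} {l1 l2 B h2 h1 : Finset ℕ}

lemma ch_zero : ch n l1 l2 B h2 h1 0 = ∅ := by simp [ch]
lemma ch_one : ch n l1 l2 B h2 h1 1 = l1 := by simp [ch]
lemma ch_two : ch n l1 l2 B h2 h1 2 = l2 := by simp [ch]
lemma ch_mid {m : ℕ} (h3 : 3 ≤ m) (hm : m ≤ n - 3) :
    ch n l1 l2 B h2 h1 m = md B m := by
  unfold ch
  rw [if_neg (by omega), if_neg (by omega), if_neg (by omega), if_pos hm]
lemma ch_n2 (hn : 6 ≤ n) : ch n l1 l2 B h2 h1 (n - 2) = h2 := by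
  unfold ch
  rw [if_neg (by omega), if_neg (by omega), if_neg (by omega), if_neg (by omega), if_pos rfl]
lemma ch_n1 (hn : 6 ≤ n) : ch n l1 l2 B h2 h1 (n - 1) = h1 := by
  unfold ch
  rw [if_neg (by omega), if_neg (by omega), if_neg (by omega), if_neg (by omega),
    if_neg (by omega), if_pos rfl]
lemma ch_top {m : ℕ} (hn : 6 ≤ n) (hm : n ≤ m) : ch n l1 l2 B h2 h1 m = Finset.Icc 1 n := by
  unfold ch
  rw [if_neg (by omega), if_neg (by omega), if_neg (by omega), if_neg (by omega),
    if_neg (by omega), if_neg (by omega)]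

lemma ch_mono (hn : 6 ≤ n) (H1 : l1 ⊆ l2) (H2 : l2 ⊆ B) (H3 : md B (n - 3) ⊆ h2)
    (H4 : h2 ⊆ h1) (H5 : h1 ⊆ Finset.Icc 1 n) :
    Monotone (ch n l1 l2 B h2 h1) := by
  apply monotone_nat_of_le_succ
  intro m
  have hcase : m = 0 ∨ m = 1 ∨ m = 2 ∨ (3 ≤ m ∧ m + 1 ≤ n - 3) ∨ m = n - 3 ∨ m = n - 2 ∨
      m = n - 1 ∨ n ≤ m := by omega
  rcases hcase with rfl | rfl | rfl | ⟨h3, h4⟩ | rfl | rfl | rfl | h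
  · rw [ch_zero]; exact empty_subset _
  · rw [ch_one, ch_two]; exact H1
  · rw [ch_two, ch_mid (by omega) (by omega)]
    exact H2.trans subset_union_left
  · rw [ch_mid h3 (by omega), ch_mid (by omega) h4]
    exact union_subset_union_right (Finset.Icc_subset_Icc_right (by omega))
  · rw [ch_mid (by omega) le_rfl, show n - 3 + 1 = n - 2 by omega, ch_n2 hn]
    exact H3
  · rw [ch_n2 hn, show n - 2 + 1 = n - 1 by omega, ch_n1 hn]
    exact H4
  · rw [ch_n1 hn, show n - 1 + 1 = n by omega, ch_top hn le_rfl]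
    exact H5
  · rw [ch_top hn h, ch_top hn (by omega)]

-- the five chains
def ch1 (n : ℕ) : ℕ → Finset ℕ :=
  ch n {1} {1,2} {1,2,6} (Finset.Icc 1 n \ {4,5}) (Finset.Icc 1 n \ {5})
def ch2 (n : ℕ) : ℕ → Finset ℕ :=
  ch n {5} {1,5} {1,3,5} (Finset.Icc 1 n \ {2,6}) (Finset.Icc 1 n \ {2})
def ch3 (n : ℕ) : ℕ → Finset ℕ :=
  ch n {2} {2,3} {2,3,4} (Finset.Icc 1 n \ {5,6}) (Finset.Icc 1 n \ {6})
def ch4 (n : ℕ) : ℕ → Finset ℕ :=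
  ch n {3} {1,3} {1,2,3} (Finset.Icc 1 n \ {4,6}) (Finset.Icc 1 n \ {4})
def ch5 (n : ℕ) : ℕ → Finset ℕ :=
  ch n {5} {3,5} {3,5,6} (Finset.Icc 1 n \ {2,4}) (Finset.Icc 1 n \ {4})

lemma sdiff_mono_aux {s t : Finset ℕ} (h : s ⊆ t) :
    Finset.Icc 1 n \ t ⊆ Finset.Icc 1 n \ s :=
  sdiff_subset_sdiff (le_refl _) h

lemma mono1 (hn : 6 ≤ n) : Monotone (ch1 n) := by
  refine ch_mono hn (by decide) (by decide) ?_ ?_ sdiff_subset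
  · intro x hx
    simp only [md, tl, mem_union, mem_insert, mem_singleton, Finset.mem_Icc] at hx
    simp only [mem_sdiff, Finset.mem_Icc, mem_insert, mem_singleton]
    omega
  · intro x hx
    simp only [mem_sdiff, Finset.mem_Icc, mem_insert, mem_singleton] at hx ⊢
    omega

lemma mono2 (hn : 6 ≤ n) : Monotone (ch2 n) := by
  refine ch_mono hn (by decide) (by decide) ?_ ?_ sdiff_subset
  · intro x hx
    simp only [md, tl, mem_union, mem_insert, mem_singleton, Finset.mem_Icc] at hx
    simp only [mem_sdiff, Finset.mem_Icc, mem_insert, mem_singleton]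
    omega
  · intro x hx
    simp only [mem_sdiff, Finset.mem_Icc, mem_insert, mem_singleton] at hx ⊢
    omega

lemma mono3 (hn : 6 ≤ n) : Monotone (ch3 n) := by
  refine ch_mono hn (by decide) (by decide) ?_ ?_ sdiff_subset
  · intro x hx
    simp only [md, tl, mem_union, mem_insert, mem_singleton, Finset.mem_Icc] at hx
    simp only [mem_sdiff, Finset.mem_Icc, mem_insert, mem_singleton]
    omega
  · intro x hx
    simp only [mem_sdiff, Finset.mem_Icc, mem_insert, mem_singleton] at hx ⊢
    omega

lemma mono4 (hn : 6 ≤ n) : Monotone (ch4 n) := by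
  refine ch_mono hn (by decide) (by decide) ?_ ?_ sdiff_subset
  · intro x hx
    simp only [md, tl, mem_union, mem_insert, mem_singleton, Finset.mem_Icc] at hx
    simp only [mem_sdiff, Finset.mem_Icc, mem_insert, mem_singleton]
    omega
  · intro x hx
    simp only [mem_sdiff, Finset.mem_Icc, mem_insert, mem_singleton] at hx ⊢
    omega

lemma mono5 (hn : 6 ≤ n) : Monotone (ch5 n) := by
  refine ch_mono hn (by decide) (by decide) ?_ ?_ sdiff_subset
  · intro x hx
    simp only [md, tl, mem_union, mem_insert, mem_singleton, Finset.mem_Icc] at hx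
    simp only [mem_sdiff, Finset.mem_Icc, mem_insert, mem_singleton]
    omega
  · intro x hx
    simp only [mem_sdiff, Finset.mem_Icc, mem_insert, mem_singleton] at hx ⊢
    omega

def Ch (n : ℕ) (f : ℕ → Finset ℕ) : Finset (Finset ℕ) := (Finset.range (n+1)).image f

lemma chain_cmp {f : ℕ → Finset ℕ} (hf : Monotone f) {A Bs : Finset ℕ}
    (hA : A ∈ Ch n f) (hB : Bs ∈ Ch n f) : A ⊆ Bs ∨ Bs ⊆ A := by
  rw [Ch, Finset.mem_image] at hA hB
  obtain ⟨a, _, rfl⟩ := hA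
  obtain ⟨b, _, rfl⟩ := hB
  rcases le_total a b with h | h
  · exact Or.inl (hf h)
  · exact Or.inr (hf h)

lemma cover (hn : 6 ≤ n) : ∀ A ∈ FF n, A ∈ Ch n (ch1 n) ∨ A ∈ Ch n (ch2 n) ∨
    A ∈ Ch n (ch3 n) ∨ A ∈ Ch n (ch4 n) ∨ A ∈ Ch n (ch5 n) := by
  intro A hA
  rcases Finset.mem_union.1 hA with hA' | hA'
  · rcases Finset.mem_union.1 hA' with hl | hm
    · fin_cases hl
      · exact Or.inl (Finset.mem_image.2 ⟨0, by rw [Finset.mem_range]; omega, ch_zero⟩)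
      · exact Or.inl (Finset.mem_image.2 ⟨1, by rw [Finset.mem_range]; omega, ch_one⟩)
      · exact Or.inr (Or.inr (Or.inl (Finset.mem_image.2 ⟨1, by rw [Finset.mem_range]; omega, ch_one⟩)))
      · exact Or.inr (Or.inr (Or.inr (Or.inl
          (Finset.mem_image.2 ⟨1, by rw [Finset.mem_range]; omega, ch_one⟩))))
      · exact Or.inr (Or.inl (Finset.mem_image.2 ⟨1, by rw [Finset.mem_range]; omega, ch_one⟩))
      · exact Or.inl (Finset.mem_image.2 ⟨2, by rw [Finset.mem_range]; omega, ch_two⟩)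
      · exact Or.inr (Or.inr (Or.inr (Or.inl
          (Finset.mem_image.2 ⟨2, by rw [Finset.mem_range]; omega, ch_two⟩))))
      · exact Or.inr (Or.inl (Finset.mem_image.2 ⟨2, by rw [Finset.mem_range]; omega, ch_two⟩))
      · exact Or.inr (Or.inr (Or.inl (Finset.mem_image.2 ⟨2, by rw [Finset.mem_range]; omega, ch_two⟩)))
      · exact Or.inr (Or.inr (Or.inr (Or.inr
          (Finset.mem_image.2 ⟨2, by rw [Finset.mem_range]; omega, ch_two⟩))))
    · rw [midF, Finset.mem_biUnion] at hm
      obtain ⟨m, hmIcc, hblk⟩ := hm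
      rw [Finset.mem_Icc] at hmIcc
      have hrange : m ∈ Finset.range (n+1) := by rw [Finset.mem_range]; omega
      simp only [blk, Finset.mem_insert, Finset.mem_singleton] at hblk
      rcases hblk with rfl | rfl | rfl | rfl | rfl
      · exact Or.inl (Finset.mem_image.2 ⟨m, hrange, ch_mid hmIcc.1 hmIcc.2⟩)
      · exact Or.inr (Or.inl (Finset.mem_image.2 ⟨m, hrange, ch_mid hmIcc.1 hmIcc.2⟩))
      · exact Or.inr (Or.inr (Or.inl (Finset.mem_image.2 ⟨m, hrange, ch_mid hmIcc.1 hmIcc.2⟩)))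
      · exact Or.inr (Or.inr (Or.inr (Or.inl
          (Finset.mem_image.2 ⟨m, hrange, ch_mid hmIcc.1 hmIcc.2⟩))))
      · exact Or.inr (Or.inr (Or.inr (Or.inr
          (Finset.mem_image.2 ⟨m, hrange, ch_mid hmIcc.1 hmIcc.2⟩))))
  · rw [topF, Finset.mem_image] at hA'
    obtain ⟨s, hs, rfl⟩ := hA'
    have hr2 : n - 2 ∈ Finset.range (n+1) := by rw [Finset.mem_range]; omega
    have hr1 : n - 1 ∈ Finset.range (n+1) := by rw [Finset.mem_range]; omega
    have hrn : n ∈ Finset.range (n+1) := by rw [Finset.mem_range]; omega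
    fin_cases hs
    · exact Or.inl (Finset.mem_image.2 ⟨n-2, hr2, ch_n2 hn⟩)
    · exact Or.inr (Or.inl (Finset.mem_image.2 ⟨n-2, hr2, ch_n2 hn⟩))
    · exact Or.inr (Or.inr (Or.inl (Finset.mem_image.2 ⟨n-2, hr2, ch_n2 hn⟩)))
    · exact Or.inr (Or.inr (Or.inr (Or.inl (Finset.mem_image.2 ⟨n-2, hr2, ch_n2 hn⟩))))
    · exact Or.inr (Or.inr (Or.inr (Or.inr (Finset.mem_image.2 ⟨n-2, hr2, ch_n2 hn⟩))))
    · exact Or.inl (Finset.mem_image.2 ⟨n-1, hr1, ch_n1 hn⟩)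
    · exact Or.inr (Or.inl (Finset.mem_image.2 ⟨n-1, hr1, ch_n1 hn⟩))
    · exact Or.inr (Or.inr (Or.inl (Finset.mem_image.2 ⟨n-1, hr1, ch_n1 hn⟩)))
    · exact Or.inr (Or.inr (Or.inr (Or.inl (Finset.mem_image.2 ⟨n-1, hr1, ch_n1 hn⟩))))
    · rw [Finset.sdiff_empty]
      exact Or.inl (Finset.mem_image.2 ⟨n, hrn, ch_top hn le_rfl⟩)

lemma no6 (hn : 6 ≤ n) : ¬ ContainsAntichain 6 (FF n) := by
  rintro ⟨S, hSF, hcard, hinc⟩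
  have key : ∀ f : ℕ → Finset ℕ, Monotone f → (S ∩ Ch n f).card ≤ 1 := by
    intro f hf
    refine Finset.card_le_one.2 ?_
    intro a ha b hb
    by_contra hne
    rcases chain_cmp hf (Finset.mem_inter.1 ha).2 (Finset.mem_inter.1 hb).2 with h | h
    · exact hinc a (Finset.mem_inter.1 ha).1 b (Finset.mem_inter.1 hb).1 hne h
    · exact hinc b (Finset.mem_inter.1 hb).1 a (Finset.mem_inter.1 ha).1 (Ne.symm hne) h
  have hS5 : S ⊆ (S ∩ Ch n (ch1 n)) ∪ (S ∩ Ch n (ch2 n)) ∪ (S ∩ Ch n (ch3 n)) ∪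
      (S ∩ Ch n (ch4 n)) ∪ (S ∩ Ch n (ch5 n)) := by
    intro A hA
    rcases cover hn A (hSF hA) with h | h | h | h | h
    · exact Finset.mem_union_left _ (Finset.mem_union_left _ (Finset.mem_union_left _
        (Finset.mem_union_left _ (Finset.mem_inter.2 ⟨hA, h⟩))))
    · exact Finset.mem_union_left _ (Finset.mem_union_left _ (Finset.mem_union_left _
        (Finset.mem_union_right _ (Finset.mem_inter.2 ⟨hA, h⟩))))
    · exact Finset.mem_union_left _ (Finset.mem_union_left _
        (Finset.mem_union_right _ (Finset.mem_inter.2 ⟨hA, h⟩)))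
    · exact Finset.mem_union_left _ (Finset.mem_union_right _ (Finset.mem_inter.2 ⟨hA, h⟩))
    · exact Finset.mem_union_right _ (Finset.mem_inter.2 ⟨hA, h⟩)
  have hb := Finset.card_le_card hS5
  have u1 := Finset.card_union_le (S ∩ Ch n (ch1 n)) (S ∩ Ch n (ch2 n))
  have u2 := Finset.card_union_le ((S ∩ Ch n (ch1 n)) ∪ (S ∩ Ch n (ch2 n))) (S ∩ Ch n (ch3 n))
  have u3 := Finset.card_union_le
    ((S ∩ Ch n (ch1 n)) ∪ (S ∩ Ch n (ch2 n)) ∪ (S ∩ Ch n (ch3 n))) (S ∩ Ch n (ch4 n))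
  have u4 := Finset.card_union_le
    ((S ∩ Ch n (ch1 n)) ∪ (S ∩ Ch n (ch2 n)) ∪ (S ∩ Ch n (ch3 n)) ∪ (S ∩ Ch n (ch4 n)))
    (S ∩ Ch n (ch5 n))
  have k1 := key _ (mono1 hn)
  have k2 := key _ (mono2 hn)
  have k3 := key _ (mono3 hn)
  have k4 := key _ (mono4 hn)
  have k5 := key _ (mono5 hn)
  omega

lemma FF_subset (hn : 6 ≤ n) : ∀ A ∈ FF n, A ⊆ Finset.Icc 1 n := by
  intro A hA
  rcases Finset.mem_union.1 hA with hA' | hA'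
  · rcases Finset.mem_union.1 hA' with hl | hm
    · fin_cases hl <;> intro x hx <;>
        simp only [Finset.mem_insert, Finset.mem_singleton, Finset.notMem_empty] at hx <;>
        simp only [Finset.mem_Icc] <;> omega
    · rw [midF, Finset.mem_biUnion] at hm
      obtain ⟨m, hmIcc, hblk⟩ := hm
      rw [Finset.mem_Icc] at hmIcc
      simp only [blk, Finset.mem_insert, Finset.mem_singleton] at hblk
      rcases hblk with rfl | rfl | rfl | rfl | rfl <;> intro x hx <;>
        simp only [md, tl, mem_union, Finset.mem_insert, Finset.mem_singleton,
          Finset.mem_Icc] at hx <;> simp only [Finset.mem_Icc] <;> omega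
  · rw [topF, Finset.mem_image] at hA'
    obtain ⟨s, _, rfl⟩ := hA'
    exact sdiff_subset


end SixSat

/-- For every integer `n ≥ 6` there exists a 6-antichain saturated family of subsets of
`[n]` of size exactly `5n - 5`. -/
theorem exists_six_saturated (n : ℕ) (hn : 6 ≤ n) :
    ∃ F : Finset (Finset ℕ), IsAntichainSaturated n 6 F ∧ F.card = 5 * n - 5 :=
  ⟨SixSat.FF n, ⟨SixSat.FF_subset hn, SixSat.no6 hn, fun X hX hXF => SixSat.sat hn X hX hXF⟩,
    SixSat.FF_card hn⟩
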